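/- Let n ≥ 4 and let λ₁ = λ₂ = λ₃ = λ > 0 (the three-dimensional spherical top case). Then a matrix K in SO(n−1) satisfies ∃ Q ∈ SO(3) with Q Λ Kᵀ = Λ if and only if K is block diagonal of the form K = diag(A, B) with A ∈ SO(3) in the upper-left 3 × 3 block and B ∈ SO(n−4) in the lower-right (n−4) × (n−4) block (all off-diagonal blocks zero). -/

import Mathlib

/-- The `3 × (n-1)` matrix `Λ` with `Λ₁₁ = λ₁`, `Λ₂₂ = λ₂`, `Λ₃₃ = λ₃` and all other
entries zero. -/
def Lam (n : ℕ) (l1 l2 l3 : ℝ) : Matrix (Fin 3) (Fin (n - 1)) ℝ :=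
  Matrix.of fun i j => if (j : ℕ) = (i : ℕ) then ![l1, l2, l3] i else 0

/-- The `n × n` block diagonal matrix `diag(A, B)` built from an `a × a` block `A` and a
`b × b` block `B`, where `a + b = n`. -/
def embedBlocks {a b n : ℕ} (h : a + b = n) (A : Matrix (Fin a) (Fin a) ℝ)
    (B : Matrix (Fin b) (Fin b) ℝ) : Matrix (Fin n) (Fin n) ℝ :=
  Matrix.reindex (finSumFinEquiv.trans (finCongr h)) (finSumFinEquiv.trans (finCongr h))
    (Matrix.fromBlocks A 0 0 B)

namespace Stmt7Aux

def g (n : ℕ) (hn : 4 ≤ n) : Fin 3 ⊕ Fin (n - 4) ≃ Fin (n - 1) :=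
  finSumFinEquiv.trans (finCongr (by have := hn; omega))

lemma g_inl {n : ℕ} (hn : 4 ≤ n) (h3 : 3 ≤ n - 1) (k : Fin 3) :
    g n hn (Sum.inl k) = Fin.castLE h3 k := by
  apply Fin.ext; simp [g]

lemma g_inr_val {n : ℕ} (hn : 4 ≤ n) (r : Fin (n - 4)) :
    ((g n hn (Sum.inr r)) : ℕ) = 3 + r := by
  simp [g]

lemma embed_eq {n : ℕ} (hn : 4 ≤ n) (h : 3 + (n - 4) = n - 1)
    (A : Matrix (Fin 3) (Fin 3) ℝ) (B : Matrix (Fin (n - 4)) (Fin (n - 4)) ℝ) :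
    embedBlocks h A B = Matrix.reindex (g n hn) (g n hn) (Matrix.fromBlocks A 0 0 B) := rfl

lemma vec3 (l : ℝ) (k : Fin 3) : ![l, l, l] k = l := by fin_cases k <;> rfl

lemma lam_apply (n : ℕ) (l : ℝ) (i : Fin 3) (j : Fin (n - 1)) :
    Lam n l l l i j = if (j : ℕ) = (i : ℕ) then l else 0 := by
  simp only [Lam, Matrix.of_apply, vec3]

lemma cond_iff {n : ℕ} (h3 : 3 ≤ n - 1) {l : ℝ} (hl : l ≠ 0)
    (Q : Matrix (Fin 3) (Fin 3) ℝ) (K : Matrix (Fin (n - 1)) (Fin (n - 1)) ℝ) :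
    Q * Lam n l l l * K.transpose = Lam n l l l ↔
      ∀ (i : Fin 3) (j : Fin (n - 1)),
        (∑ k, Q i k * K j (Fin.castLE h3 k)) = if (j : ℕ) = (i : ℕ) then 1 else 0 := by
  have hLK : ∀ (k : Fin 3) (j : Fin (n - 1)),
      (Lam n l l l * K.transpose) k j = l * K j (Fin.castLE h3 k) := by
    intro k j
    rw [Matrix.mul_apply, Finset.sum_eq_single (Fin.castLE h3 k)]
    · rw [lam_apply, Matrix.transpose_apply, if_pos (by simp)]
    · intro b _ hb
      rw [lam_apply, if_neg, zero_mul]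
      intro hbk
      exact hb (Fin.ext (by simpa using hbk))
    · intro h; exact absurd (Finset.mem_univ _) h
  have key : ∀ (i : Fin 3) (j : Fin (n - 1)),
      (Q * Lam n l l l * K.transpose) i j = l * ∑ k, Q i k * K j (Fin.castLE h3 k) := by
    intro i j
    rw [Matrix.mul_assoc, Matrix.mul_apply, Finset.mul_sum]
    refine Finset.sum_congr rfl fun k _ => ?_
    rw [hLK]; ring
  constructor
  · intro h i j
    have h1 : (Q * Lam n l l l * K.transpose) i j = Lam n l l l i j := by rw [h]
    rw [key, lam_apply] at h1
    apply mul_left_cancel₀ hl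
    rw [h1]
    split <;> ring
  · intro h
    ext i j
    rw [key, h i j, lam_apply]
    split <;> ring

end Stmt7Aux

/-- Three-dimensional spherical top case: for `n ≥ 4` and `λ₁ = λ₂ = λ₃ = λ > 0`, a matrix
`K ∈ SO(n-1)` satisfies `∃ Q ∈ SO(3), Q Λ Kᵀ = Λ` iff `K = diag(A, B)` with `A ∈ SO(3)`
and `B ∈ SO(n-4)`. -/
theorem stmt_7 (n : ℕ) (hn : 4 ≤ n) (l : ℝ) (hl : 0 < l)
    (K : Matrix (Fin (n - 1)) (Fin (n - 1)) ℝ)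
    (hK : K.transpose * K = 1 ∧ K.det = 1) :
    (∃ Q : Matrix (Fin 3) (Fin 3) ℝ,
        (Q.transpose * Q = 1 ∧ Q.det = 1) ∧
        Q * Lam n l l l * K.transpose = Lam n l l l) ↔
      ∃ (A : Matrix (Fin 3) (Fin 3) ℝ) (B : Matrix (Fin (n - 4)) (Fin (n - 4)) ℝ),
        (A.transpose * A = 1 ∧ A.det = 1) ∧
        (B.transpose * B = 1 ∧ B.det = 1) ∧
        K = embedBlocks (by omega : 3 + (n - 4) = n - 1) A B := by
  obtain ⟨hKo, hKd⟩ := hK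
  have h3 : 3 ≤ n - 1 := by omega
  have hsum : 3 + (n - 4) = n - 1 := by omega
  constructor
  · rintro ⟨Q, ⟨hQo, hQd⟩, hQe⟩
    have hQo' : Q * Q.transpose = 1 := mul_eq_one_comm.mpr hQo
    have hc := (Stmt7Aux.cond_iff h3 hl.ne' Q K).mp hQe
    -- first three columns of K
    have hcol : ∀ (j : Fin (n - 1)) (k : Fin 3),
        K j (Fin.castLE h3 k) = ∑ i, Q i k * (if (j : ℕ) = (i : ℕ) then (1 : ℝ) else 0) := by
      intro j k
      set C : Matrix (Fin (n - 1)) (Fin 3) ℝ := K.submatrix id (Fin.castLE h3) with hC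
      set N : Matrix (Fin 3) (Fin (n - 1)) ℝ :=
        Matrix.of (fun i j => if (j : ℕ) = (i : ℕ) then (1 : ℝ) else 0) with hN
      have hQC : Q * C.transpose = N := by
        ext i j
        rw [Matrix.mul_apply]
        simpa [hC, hN] using hc i j
      have hCt : C.transpose = Q.transpose * N := by
        calc C.transpose = (Q.transpose * Q) * C.transpose := by rw [hQo, Matrix.one_mul]
        _ = Q.transpose * N := by rw [Matrix.mul_assoc, hQC]
      have h5 := congrFun (congrFun hCt k) j
      simpa [hC, hN, Matrix.mul_apply] using h5
    have hcol_lo : ∀ (j' k : Fin 3), K (Fin.castLE h3 j') (Fin.castLE h3 k) = Q j' k := by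
      intro j' k
      rw [hcol, Finset.sum_eq_single j']
      · simp
      · intro b _ hb
        rw [if_neg, mul_zero]
        intro hbj
        exact hb (Fin.ext (by simpa using hbj.symm))
      · intro h; exact absurd (Finset.mem_univ _) h
    have hcol_hi : ∀ (j : Fin (n - 1)), 3 ≤ (j : ℕ) → ∀ k, K j (Fin.castLE h3 k) = 0 := by
      intro j hj k
      rw [hcol, Finset.sum_eq_zero]
      intro i _
      rw [if_neg, mul_zero]
      intro hji
      have := i.isLt
      omega
    -- top-right block vanishes
    have hTR : ∀ (i' : Fin 3) (c : Fin (n - 1)), 3 ≤ (c : ℕ) → K (Fin.castLE h3 i') c = 0 := by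
      intro i' c hc3
      have hQv : Q.transpose.mulVec (fun i => K (Fin.castLE h3 i) c) = 0 := by
        funext i
        have h1 : ∑ j : Fin (n - 1), K j (Fin.castLE h3 i) * K j c = 0 := by
          have h0 : (K.transpose * K) (Fin.castLE h3 i) c = 0 := by
            rw [hKo, Matrix.one_apply_ne]
            intro he
            have := congrArg Fin.val he
            simp at this
            omega
          rw [Matrix.mul_apply] at h0
          simpa [Matrix.transpose_apply] using h0
        have h2 : ∑ j : Fin (n - 1), K j (Fin.castLE h3 i) * K j c
            = ∑ i'' : Fin 3, Q i'' i * K (Fin.castLE h3 i'') c := by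
          calc ∑ j : Fin (n - 1), K j (Fin.castLE h3 i) * K j c
              = ∑ j : Fin (n - 1), ∑ i'' : Fin 3,
                  Q i'' i * ((if (j : ℕ) = (i'' : ℕ) then (1 : ℝ) else 0) * K j c) := by
                refine Finset.sum_congr rfl fun j _ => ?_
                rw [hcol, Finset.sum_mul]
                refine Finset.sum_congr rfl fun i'' _ => by ring
            _ = ∑ i'' : Fin 3, Q i'' i *
                  ∑ j : Fin (n - 1), (if (j : ℕ) = (i'' : ℕ) then (1 : ℝ) else 0) * K j c := by
                rw [Finset.sum_comm]
                refine Finset.sum_congr rfl fun i'' _ => by rw [Finset.mul_sum]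
            _ = ∑ i'' : Fin 3, Q i'' i * K (Fin.castLE h3 i'') c := by
                refine Finset.sum_congr rfl fun i'' _ => ?_
                congr 1
                rw [Finset.sum_eq_single (Fin.castLE h3 i'')]
                · rw [if_pos (by simp), one_mul]
                · intro b _ hb
                  rw [if_neg, zero_mul]
                  intro hbe
                  exact hb (Fin.ext (by simpa using hbe))
                · intro h; exact absurd (Finset.mem_univ _) h
        have h4 : Q.transpose.mulVec (fun i => K (Fin.castLE h3 i) c) i
            = ∑ i'' : Fin 3, Q i'' i * K (Fin.castLE h3 i'') c := by
          simp only [Matrix.mulVec, dotProduct, Matrix.transpose_apply]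
        rw [h4, ← h2, h1]
        simp
      have hv0 : (fun i => K (Fin.castLE h3 i) c) = (0 : Fin 3 → ℝ) := by
        have h6 : Q.mulVec (Q.transpose.mulVec (fun i => K (Fin.castLE h3 i) c))
            = (fun i => K (Fin.castLE h3 i) c) := by
          rw [Matrix.mulVec_mulVec, hQo', Matrix.one_mulVec]
        rw [hQv, Matrix.mulVec_zero] at h6
        exact h6.symm
      have := congrFun hv0 i'
      simpa using this
    -- assemble blocks
    set B : Matrix (Fin (n - 4)) (Fin (n - 4)) ℝ :=
      Matrix.of (fun i j => K (Stmt7Aux.g n hn (Sum.inr i)) (Stmt7Aux.g n hn (Sum.inr j))) with hB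
    have hK' : (Matrix.reindex (Stmt7Aux.g n hn) (Stmt7Aux.g n hn)).symm K = Matrix.fromBlocks Q 0 0 B := by
      ext x y
      have happ : ((Matrix.reindex (Stmt7Aux.g n hn) (Stmt7Aux.g n hn)).symm K) x y
          = K (Stmt7Aux.g n hn x) (Stmt7Aux.g n hn y) := by
        simp [Matrix.reindex_apply]
      cases x with
      | inl i =>
        cases y with
        | inl j =>
          rw [happ, Stmt7Aux.g_inl hn h3, Stmt7Aux.g_inl hn h3, hcol_lo]
          rfl
        | inr r =>
          rw [happ, Stmt7Aux.g_inl hn h3]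
          rw [hTR i _ (by rw [Stmt7Aux.g_inr_val hn]; omega)]
          rfl
      | inr r =>
        cases y with
        | inl j =>
          rw [happ, Stmt7Aux.g_inl hn h3]
          rw [hcol_hi _ (by rw [Stmt7Aux.g_inr_val hn]; omega)]
          rfl
        | inr s =>
          rw [happ]
          rfl
    have hKeq : K = Matrix.reindex (Stmt7Aux.g n hn) (Stmt7Aux.g n hn) (Matrix.fromBlocks Q 0 0 B) :=
      (Equiv.symm_apply_eq _).mp hK'
    have hfrom : (Matrix.fromBlocks Q 0 0 B).transpose * Matrix.fromBlocks Q 0 0 B = 1 := by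
      have h2 : ((Matrix.fromBlocks Q 0 0 B).transpose * Matrix.fromBlocks Q 0 0 B).submatrix
          ⇑(Stmt7Aux.g n hn).symm ⇑(Stmt7Aux.g n hn).symm = (1 : Matrix (Fin (n - 1)) (Fin (n - 1)) ℝ) := by
        rw [← Matrix.submatrix_mul_equiv _ _ _ (Stmt7Aux.g n hn).symm _, ← Matrix.transpose_submatrix,
          ← Matrix.reindex_apply, ← hKeq]
        exact hKo
      have h7 := congrArg (fun M => Matrix.submatrix M ⇑(Stmt7Aux.g n hn) ⇑(Stmt7Aux.g n hn)) h2
      simpa [Matrix.submatrix_submatrix, Equiv.symm_comp_self, Matrix.submatrix_one_equiv]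
        using h7
    have hBo : B.transpose * B = 1 := by
      rw [Matrix.fromBlocks_transpose, Matrix.fromBlocks_multiply] at hfrom
      have h8 := congrArg Matrix.toBlocks₂₂ hfrom
      rw [Matrix.toBlocks_fromBlocks₂₂] at h8
      rw [← Matrix.fromBlocks_one (l := Fin 3) (m := Fin (n - 4)) (α := ℝ),
        Matrix.toBlocks_fromBlocks₂₂] at h8
      simpa using h8
    have hBd : B.det = 1 := by
      have h9 : K.det = Q.det * B.det := by
        rw [hKeq, Matrix.det_reindex_self, Matrix.det_fromBlocks_zero₁₂]
      rw [hKd, hQd, one_mul] at h9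
      exact h9.symm
    exact ⟨Q, B, ⟨hQo, hQd⟩, ⟨hBo, hBd⟩, by rw [Stmt7Aux.embed_eq hn]; exact hKeq⟩
  · rintro ⟨A, B, ⟨hAo, hAd⟩, ⟨hBo, hBd⟩, hKeq⟩
    have hAo' : A * A.transpose = 1 := mul_eq_one_comm.mp hAo
    refine ⟨A, ⟨hAo, hAd⟩, (Stmt7Aux.cond_iff h3 hl.ne' A K).mpr ?_⟩
    intro i j
    rw [Stmt7Aux.embed_eq hn] at hKeq
    obtain ⟨y, rfl⟩ : ∃ y, Stmt7Aux.g n hn y = j := ⟨(Stmt7Aux.g n hn).symm j, Equiv.apply_symm_apply _ _⟩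
    have hKapp : ∀ x y, K (Stmt7Aux.g n hn x) (Stmt7Aux.g n hn y) = Matrix.fromBlocks A 0 0 B x y := by
      intro x y
      rw [hKeq]
      simp [Matrix.reindex_apply]
    cases y with
    | inl j' =>
      have hval : ((Stmt7Aux.g n hn (Sum.inl j') : Fin (n - 1)) : ℕ) = (j' : ℕ) := by
        rw [Stmt7Aux.g_inl hn h3]; simp
      have hsumA : ∑ k, A i k * K (Stmt7Aux.g n hn (Sum.inl j')) (Fin.castLE h3 k)
          = (A * A.transpose) i j' := by
        rw [Matrix.mul_apply]
        refine Finset.sum_congr rfl fun k _ => ?_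
        rw [← Stmt7Aux.g_inl hn h3, hKapp]
        rfl
      rw [hsumA, hAo', Matrix.one_apply, hval]
      by_cases hij : i = j'
      · rw [if_pos hij, if_pos (by rw [hij])]
      · rw [if_neg hij, if_neg (fun h => hij (Fin.ext h.symm))]
    | inr r =>
      have hval : 3 ≤ ((Stmt7Aux.g n hn (Sum.inr r) : Fin (n - 1)) : ℕ) := by
        rw [Stmt7Aux.g_inr_val hn]; omega
      rw [Finset.sum_eq_zero, if_neg (by have := i.isLt; omega)]
      intro k _
      rw [← Stmt7Aux.g_inl hn h3, hKapp]
      show A i k * (0 : Matrix (Fin (n-4)) (Fin 3) ℝ) r k = 0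
      simp
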